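/- If a cycle C in a graph contains at least k+1 vertices each having at least k neighbors among the vertices of C, then C has at least (k+1)(k-2)/2 chords. -/

import Mathlib

open scoped Classical in
/-- The set of chords of a cycle `C` in `G`: edges of `G` joining two vertices of `C`
that are not edges of `C`. -/
noncomputable def chordFinset {V : Type*} [Fintype V] (G : SimpleGraph V)
    {v : V} (C : G.Walk v v) : Finset (Sym2 V) :=
  G.edgeFinset.filter (fun e => e ∉ C.edges ∧ ∀ x ∈ e, x ∈ C.support)

/-- In a cycle, the `dropLast` of the support has no duplicates. -/
lemma isCycle_dropLast_support_nodup {V : Type*} {G : SimpleGraph V} {v : V}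
    {C : G.Walk v v} (hC : C.IsCycle) : C.support.dropLast.Nodup := by
  obtain ⟨t, ht⟩ : ∃ t, C.support = v :: t := ⟨C.support.tail, by
    rw [← C.support_eq_cons]⟩
  have htnd : t.Nodup := by have := hC.support_nodup; rwa [ht] at this
  have hlen : t.length = C.length := by
    have := C.length_support; rw [ht] at this; simpa using this
  have htne : t ≠ [] := by
    intro h; rw [h] at hlen; have := hC.three_le_length; simp at hlen; omega
  obtain ⟨a, l, rfl⟩ := List.exists_cons_of_ne_nil htne
  have h0 : C.support.getLast? = some v := by
    rw [List.getLast?_eq_getLast C.support_ne_nil, C.getLast_support]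
  rw [ht, List.getLast?_cons_cons] at h0
  have hdecomp : (a :: l).dropLast ++ [v] = a :: l :=
    List.dropLast_append_getLast? v (by simp [h0, Option.mem_def])
  rw [ht, List.dropLast_cons_of_ne_nil (List.cons_ne_nil a l)]
  have h2 := htnd
  rw [← hdecomp, List.nodup_append] at h2
  refine List.nodup_cons.mpr ⟨?_, h2.1⟩
  intro hv
  exact h2.2.2 v hv v (by simp) rfl

/-- In a cycle, any two darts with the same first vertex coincide. -/
lemma isCycle_dart_fst_inj {V : Type*} {G : SimpleGraph V} {v : V}
    {C : G.Walk v v} (hC : C.IsCycle) {d d' : G.Dart} (hd : d ∈ C.darts)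
    (hd' : d' ∈ C.darts) (h : d.fst = d'.fst) : d = d' := by
  have hnd : (C.darts.map (·.fst)).Nodup := by
    rw [SimpleGraph.Walk.map_fst_darts]; exact isCycle_dropLast_support_nodup hC
  exact List.inj_on_of_nodup_map hnd hd hd' h

/-- In a cycle, any two darts with the same second vertex coincide. -/
lemma isCycle_dart_snd_inj {V : Type*} {G : SimpleGraph V} {v : V}
    {C : G.Walk v v} (hC : C.IsCycle) {d d' : G.Dart} (hd : d ∈ C.darts)
    (hd' : d' ∈ C.darts) (h : d.snd = d'.snd) : d = d' := by
  have hnd : (C.darts.map (·.snd)).Nodup := by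
    rw [SimpleGraph.Walk.map_snd_darts]; exact hC.support_nodup
  exact List.inj_on_of_nodup_map hnd hd hd' h

/-- Each vertex lies on at most two edges of a cycle. -/
lemma isCycle_card_cycle_neighbors_le_two {V : Type*} [Fintype V] [DecidableEq V] {G : SimpleGraph V} {v : V}
    {C : G.Walk v v} (hC : C.IsCycle) (u : V) :
    (Finset.univ.filter (fun x : V => s(u, x) ∈ C.edges)).card ≤ 2 := by
  classical
  have key : ∀ x ∈ Finset.univ.filter (fun x : V => s(u, x) ∈ C.edges),
      ∃ d ∈ C.darts, (d.fst = u ∧ d.snd = x) ∨ (d.fst = x ∧ d.snd = u) := by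
    intro x hx
    simp only [Finset.mem_filter] at hx
    obtain ⟨d, hd, hde⟩ := List.mem_map.mp hx.2
    refine ⟨d, hd, ?_⟩
    have : s(d.fst, d.snd) = s(u, x) := hde
    rw [Sym2.eq_iff] at this
    tauto
  have hinj : Set.InjOn (fun x => decide (∃ d ∈ C.darts, d.fst = u ∧ d.snd = x))
      ↑(Finset.univ.filter (fun x : V => s(u, x) ∈ C.edges)) := by
    intro x hx y hy hxy
    simp only [Finset.coe_filter] at hx hy
    simp only [decide_eq_decide] at hxy
    by_cases hex : ∃ d ∈ C.darts, d.fst = u ∧ d.snd = x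
    · obtain ⟨d, hd, hdu, hdx⟩ := hex
      obtain ⟨d', hd', hdu', hdy⟩ := hxy.mp ⟨d, hd, hdu, hdx⟩
      have := isCycle_dart_fst_inj hC hd hd' (hdu.trans hdu'.symm)
      rw [← hdx, ← hdy, this]
    · have hey : ¬ ∃ d ∈ C.darts, d.fst = u ∧ d.snd = y := fun h => hex (hxy.mpr h)
      obtain ⟨d, hd, hcase⟩ := key x (by simpa using hx.2)
      obtain ⟨d', hd', hcase'⟩ := key y (by simpa using hy.2)
      have hdx : d.fst = x ∧ d.snd = u := by
        rcases hcase with h | h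
        · exact absurd ⟨d, hd, h⟩ hex
        · exact h
      have hdy : d'.fst = y ∧ d'.snd = u := by
        rcases hcase' with h | h
        · exact absurd ⟨d', hd', h⟩ hey
        · exact h
      have := isCycle_dart_snd_inj hC hd hd' (hdx.2.trans hdy.2.symm)
      rw [← hdx.1, ← hdy.1, this]
  calc (Finset.univ.filter (fun x : V => s(u, x) ∈ C.edges)).card
      ≤ (Finset.univ : Finset Bool).card :=
        Finset.card_le_card_of_injOn _ (fun _ _ => Finset.mem_univ _) hinj
    _ = 2 := by simp

open scoped Classical in
/-- If a cycle `C` contains at least `k+1` vertices each having at least `k` neighbors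
among the vertices of `C`, then `C` has at least `(k+1)(k-2)/2` chords. -/
theorem cycle_with_high_degree_vertices_many_chords {V : Type*} [Fintype V] [DecidableEq V]
    (G : SimpleGraph V) [DecidableRel G.Adj]
    (k : ℕ) (hk : 2 ≤ k) {v : V} (C : G.Walk v v) (hC : C.IsCycle)
    (hmany : k + 1 ≤ (C.support.toFinset.filter
      (fun u => k ≤ (C.support.toFinset.filter (fun x => G.Adj u x)).card)).card) :
    (k + 1) * (k - 2) / 2 ≤ (chordFinset G C).card := by
  classical
  set S := C.support.toFinset.filter
      (fun u => k ≤ (C.support.toFinset.filter (fun x => G.Adj u x)).card) with hS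
  -- each vertex of S lies on at least k - 2 chords
  have hlow : ∀ u ∈ S, k - 2 ≤ ((chordFinset G C).filter (fun e => u ∈ e)).card := by
    intro u hu
    simp only [hS, Finset.mem_filter] at hu
    obtain ⟨huC, hudeg⟩ := hu
    set N := C.support.toFinset.filter (fun x => G.Adj u x) with hN
    set D := Finset.univ.filter (fun x : V => s(u, x) ∈ C.edges) with hD
    have hmap : ∀ x ∈ N \ D, s(u, x) ∈ (chordFinset G C).filter (fun e => u ∈ e) := by
      intro x hx
      simp only [Finset.mem_sdiff, hN, hD, Finset.mem_filter, Finset.mem_univ,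
        true_and] at hx
      obtain ⟨⟨hxs, hadj⟩, hxe⟩ := hx
      simp only [chordFinset, Finset.mem_filter, SimpleGraph.mem_edgeFinset,
        SimpleGraph.mem_edgeSet]
      refine ⟨⟨hadj, hxe, ?_⟩, by simp⟩
      intro y hy
      rw [Sym2.mem_iff] at hy
      rcases hy with rfl | rfl
      · simpa using huC
      · simpa using hxs
    have hinj : Set.InjOn (fun x => s(u, x)) ↑(N \ D) := by
      intro x _ y _ hxy
      simp only [Sym2.eq_iff] at hxy
      rcases hxy with ⟨_, h⟩ | ⟨h1, h2⟩
      · exact h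
      · rw [← h1, h2]
    have hcard : (N \ D).card ≤ ((chordFinset G C).filter (fun e => u ∈ e)).card :=
      Finset.card_le_card_of_injOn _ hmap hinj
    have : k - 2 ≤ (N \ D).card := by
      have h1 := Finset.le_card_sdiff D N
      have h2 : D.card ≤ 2 := by
        rw [hD]; exact isCycle_card_cycle_neighbors_le_two hC u
      omega
    omega
  -- double counting
  have hsum : S.card * (k - 2) ≤ 2 * (chordFinset G C).card := by
    calc S.card * (k - 2) = ∑ _u ∈ S, (k - 2) := by rw [Finset.sum_const, smul_eq_mul]
      _ ≤ ∑ u ∈ S, ((chordFinset G C).filter (fun e => u ∈ e)).card :=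
          Finset.sum_le_sum hlow
      _ = ∑ u ∈ S, ∑ e ∈ chordFinset G C, (if u ∈ e then 1 else 0) := by
          exact Finset.sum_congr rfl fun u _ => Finset.card_filter _ _
      _ = ∑ e ∈ chordFinset G C, ∑ u ∈ S, (if u ∈ e then 1 else 0) := Finset.sum_comm
      _ = ∑ e ∈ chordFinset G C, (S.filter (fun u => u ∈ e)).card := by
          exact Finset.sum_congr rfl fun e _ => (Finset.card_filter _ _).symm
      _ ≤ ∑ _e ∈ chordFinset G C, 2 := by
          refine Finset.sum_le_sum fun e _ => ?_
          induction e with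
          | h a b =>
            calc (S.filter (fun u => u ∈ s(a, b))).card ≤ ({a, b} : Finset V).card := by
                  refine Finset.card_le_card fun u hu => ?_
                  simp only [Finset.mem_filter, Sym2.mem_iff] at hu
                  simp only [Finset.mem_insert, Finset.mem_singleton]
                  exact hu.2
              _ ≤ 2 := Finset.card_insert_le _ _ |>.trans (by simp)
      _ = 2 * (chordFinset G C).card := by rw [Finset.sum_const, smul_eq_mul, mul_comm]
  have hfinal : (k + 1) * (k - 2) ≤ 2 * (chordFinset G C).card := by
    calc (k + 1) * (k - 2) ≤ S.card * (k - 2) := Nat.mul_le_mul_right _ hmany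
      _ ≤ 2 * (chordFinset G C).card := hsum
  calc (k + 1) * (k - 2) / 2 ≤ 2 * (chordFinset G C).card / 2 :=
        Nat.div_le_div_right hfinal
    _ = (chordFinset G C).card := by omega
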